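/- The Schoen threefold defined by x₁³+x₂³+x₃³ = x₄³+x₅³+x₆³ and x₁x₂x₃ = x₄x₅x₆ in P^5 over ℂ has exactly 108 singular points. -/

import Mathlib

noncomputable section SchoenAux

/-- primitive cube root of unity -/
def ω : ℂ := ⟨-1/2, Real.sqrt 3 / 2⟩

lemma hω2 : ω^2 + ω + 1 = 0 := by
  have h3 : Real.sqrt 3 * Real.sqrt 3 = 3 := Real.mul_self_sqrt (by norm_num)
  apply Complex.ext <;>
    simp [ω, pow_two, Complex.add_re, Complex.add_im, Complex.mul_re, Complex.mul_im] <;>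
    nlinarith [h3]

lemma hω3 : ω^3 = 1 := by linear_combination (ω - 1) * hω2

lemma hωne1 : ω ≠ 1 := by
  intro h
  have : (ω).re = 1 := by rw [h]; simp
  simp [ω] at this; norm_num at this

lemma hωne0 : ω ≠ 0 := by
  intro h
  have h' := hω3
  rw [h] at h'; simp at h'

lemma hω2ne1 : ω^2 ≠ 1 := by
  intro h
  have : ω^3 = ω := by rw [pow_succ, pow_two] at *; linear_combination ω * h
  rw [hω3] at this; exact hωne1 this.symm

lemma hωneω2 : ω ≠ ω^2 := by
  intro h
  have : ω * (1 - ω) = 0 := by linear_combination h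
  rcases mul_eq_zero.1 this with h' | h'
  · exact hωne0 h'
  · exact hωne1 (by linear_combination -h')

lemma cube_eq (z : ℂ) (h : z^3 = 1) : z = 1 ∨ z = ω ∨ z = ω^2 := by
  have h0 : (z - 1) * ((z - ω) * (z - ω^2)) = 0 := by
    linear_combination h - hω3 + (ω*z - z^2)*hω2
  rcases mul_eq_zero.1 h0 with h1 | h1
  · exact Or.inl (sub_eq_zero.1 h1)
  rcases mul_eq_zero.1 h1 with h2 | h2
  · exact Or.inr (Or.inl (sub_eq_zero.1 h2))
  · exact Or.inr (Or.inr (sub_eq_zero.1 h2))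

/-- `ωz k = ω ^ k` for `k : ZMod 3`. -/
def ωz (k : ZMod 3) : ℂ := ω ^ k.val

lemma ωz_zero : ωz 0 = 1 := by simp [ωz]
lemma ωz_one : ωz 1 = ω := by rw [ωz, ZMod.val_one, pow_one]
lemma ωz_two : ωz 2 = ω^2 := by rw [ωz, show (2:ZMod 3).val = 2 from rfl]

lemma zmod3_cases (x : ZMod 3) : x = 0 ∨ x = 1 ∨ x = 2 := by revert x; decide

lemma ω_pow_mod (n : ℕ) : ω ^ n = ω ^ (n % 3) := by
  conv_lhs => rw [← Nat.mod_add_div n 3, pow_add, pow_mul, hω3, one_pow, mul_one]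

lemma ωz_cube (k : ZMod 3) : ωz k ^ 3 = 1 := by
  rw [ωz, ← pow_mul, mul_comm, pow_mul, hω3, one_pow]

lemma ωz_ne0 (k : ZMod 3) : ωz k ≠ 0 := pow_ne_zero _ hωne0

lemma ωz_add (a b : ZMod 3) : ωz (a + b) = ωz a * ωz b := by
  rw [ωz, ωz, ωz, ← pow_add, ZMod.val_add]
  exact (ω_pow_mod _).symm

lemma ωz_inj {a b : ZMod 3} (h : ωz a = ωz b) : a = b := by
  rcases zmod3_cases a with rfl | rfl | rfl <;> rcases zmod3_cases b with rfl | rfl | rfl <;>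
    simp only [ωz_zero, ωz_one, ωz_two] at h <;>
    first
      | rfl
      | exact absurd h.symm hωne1 | exact absurd h hωne1
      | exact absurd h.symm hω2ne1 | exact absurd h hω2ne1
      | exact absurd h hωneω2 | exact absurd h.symm hωneω2

lemma exists_ωz (z : ℂ) (h : z^3 = 1) : ∃ a : ZMod 3, z = ωz a := by
  rcases cube_eq z h with h' | h' | h'
  · exact ⟨0, by rw [ωz_zero, h']⟩
  · exact ⟨1, by rw [ωz_one, h']⟩
  · exact ⟨2, by rw [ωz_two, h']⟩


/-- the Jacobian matrix -/
def J (v : Fin 6 → ℂ) : Matrix (Fin 2) (Fin 6) ℂ :=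
  Matrix.of fun (i : Fin 2) (j : Fin 6) =>
    if i = 0 then
      (if (j : ℕ) < 3 then 3 * v j ^ 2 else -(3 * v j ^ 2))
    else
      (if (j : ℕ) < 3 then ∏ l ∈ ({0, 1, 2} : Finset (Fin 6)) \ {j}, v l
       else -(∏ l ∈ ({3, 4, 5} : Finset (Fin 6)) \ {j}, v l))

lemma Jdef (v : Fin 6 → ℂ) : J v = Matrix.of ![
    ![3*v 0^2, 3*v 1^2, 3*v 2^2, -(3*v 3^2), -(3*v 4^2), -(3*v 5^2)],
    ![v 1*v 2, v 0*v 2, v 0*v 1, -(v 4*v 5), -(v 3*v 5), -(v 3*v 4)]] := by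
  funext i j
  fin_cases i <;> fin_cases j <;>
    simp [J, Finset.sdiff_eq_filter] <;>
    (try simp [Finset.filter_insert, Finset.filter_singleton]) <;>
    (try ring_nf) <;>
    (try (rw [show (5:Fin 6) = (4:Fin 5).succ from rfl, Matrix.cons_val_succ,
      Matrix.cons_val_four, Matrix.vecHead, Matrix.vecTail]; rfl))

lemma J00 (v : Fin 6 → ℂ) : J v 0 0 = 3*v 0^2 := by rw [Jdef]; rfl
lemma J01 (v : Fin 6 → ℂ) : J v 0 1 = 3*v 1^2 := by rw [Jdef]; rfl
lemma J02 (v : Fin 6 → ℂ) : J v 0 2 = 3*v 2^2 := by rw [Jdef]; rfl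
lemma J03 (v : Fin 6 → ℂ) : J v 0 3 = -(3*v 3^2) := by rw [Jdef]; rfl
lemma J04 (v : Fin 6 → ℂ) : J v 0 4 = -(3*v 4^2) := by rw [Jdef]; rfl
lemma J05 (v : Fin 6 → ℂ) : J v 0 5 = -(3*v 5^2) := by rw [Jdef]; rfl
lemma J10 (v : Fin 6 → ℂ) : J v 1 0 = v 1*v 2 := by rw [Jdef]; rfl
lemma J11 (v : Fin 6 → ℂ) : J v 1 1 = v 0*v 2 := by rw [Jdef]; rfl
lemma J12 (v : Fin 6 → ℂ) : J v 1 2 = v 0*v 1 := by rw [Jdef]; rfl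
lemma J13 (v : Fin 6 → ℂ) : J v 1 3 = -(v 4*v 5) := by rw [Jdef]; rfl
lemma J14 (v : Fin 6 → ℂ) : J v 1 4 = -(v 3*v 5) := by rw [Jdef]; rfl
lemma J15 (v : Fin 6 → ℂ) : J v 1 5 = -(v 3*v 4) := by rw [Jdef]; rfl

lemma rank_le_one_of_row (M : Matrix (Fin 2) (Fin 6) ℂ) (c : ℂ)
    (h : ∀ j, M 1 j = c * M 0 j) : M.rank ≤ 1 := by
  have hu : ![(1:ℂ), c] ≠ 0 := by
    intro hc; have := congrFun hc 0; simp at this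
  have hr : LinearMap.range M.mulVecLin ≤ Submodule.span ℂ {![(1:ℂ), c]} := by
    rintro x ⟨v, rfl⟩
    have : M.mulVecLin v = (M.mulVec v 0) • ![(1:ℂ), c] := by
      funext k
      fin_cases k
      · simp [Matrix.mulVecLin]
      · simp only [Matrix.mulVecLin_apply]
        simp [Matrix.mulVec, dotProduct, h]
        rw [Finset.sum_mul]
        exact Finset.sum_congr rfl fun x _ => by ring
    rw [this]
    exact Submodule.smul_mem _ _ (Submodule.mem_span_singleton_self _)
  calc M.rank ≤ Module.finrank ℂ (Submodule.span ℂ {![(1:ℂ), c]}) :=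
        Submodule.finrank_mono hr
    _ = 1 := finrank_span_singleton hu

lemma minor_eq (M : Matrix (Fin 2) (Fin 6) ℂ) (h : M.rank ≤ 1) (i j : Fin 6) :
    M 0 i * M 1 j = M 0 j * M 1 i := by
  by_contra hne
  set N : Matrix (Fin 2) (Fin 2) ℂ := M.submatrix id ![i, j] with hN
  have hd : N.det ≠ 0 := by
    simp [Matrix.det_fin_two, hN, Matrix.submatrix_apply]
    intro hc; exact hne (by linear_combination hc)
  have h2 : N.rank = 2 := by
    rw [Matrix.rank_of_isUnit]
    · simp
    · exact (Matrix.isUnit_iff_isUnit_det N).2 hd.isUnit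
  have h3 : N.rank ≤ M.rank := by
    have : N = M * (1 : Matrix (Fin 6) (Fin 6) ℂ).submatrix (Equiv.refl (Fin 6)) ![i, j] := by
      rw [Matrix.mul_submatrix_one]; rfl
    rw [this]; exact Matrix.rank_mul_le_left _ _
  omega

lemma rank_smul_eq {c : ℂ} (hc : c ≠ 0) (A : Matrix (Fin 2) (Fin 6) ℂ) :
    (c • A).rank = A.rank := by
  have h1 : c • A = (c • (1 : Matrix (Fin 2) (Fin 2) ℂ)) * A := by
    rw [Matrix.smul_mul, Matrix.one_mul]
  rw [h1, Matrix.rank_mul_eq_right_of_isUnit_det]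
  rw [Matrix.det_smul, Matrix.det_one]
  simpa using (pow_ne_zero 2 hc).isUnit

lemma J_smul (c : ℂ) (v : Fin 6 → ℂ) : J (c • v) = c^2 • J v := by
  rw [Jdef, Jdef]
  funext i j
  fin_cases i <;> fin_cases j <;>
    simp [Pi.smul_apply, smul_eq_mul, Matrix.vecHead, Matrix.vecTail,
      show (5:Fin 6) = (4:Fin 5).succ from rfl, Matrix.cons_val_succ, Matrix.cons_val_four] <;>
    ring

lemma minors6 (v : Fin 6 → ℂ) (h : (J v).rank ≤ 1) :
    v 2*(v 0^3 - v 1^3) = 0 ∧ v 1*(v 0^3 - v 2^3) = 0 ∧ v 0*(v 1^3 - v 2^3) = 0 ∧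
    v 5*(v 3^3 - v 4^3) = 0 ∧ v 4*(v 3^3 - v 5^3) = 0 ∧ v 3*(v 4^3 - v 5^3) = 0 := by
  have m01 := minor_eq _ h 0 1
  have m02 := minor_eq _ h 0 2
  have m12 := minor_eq _ h 1 2
  have m34 := minor_eq _ h 3 4
  have m35 := minor_eq _ h 3 5
  have m45 := minor_eq _ h 4 5
  simp only [J00, J01, J02, J03, J04, J05, J10, J11, J12, J13, J14, J15] at m01 m02 m12 m34 m35 m45
  refine ⟨by linear_combination m01/3, by linear_combination m02/3, by linear_combination m12/3,
    by linear_combination m34/3, by linear_combination m35/3, by linear_combination m45/3⟩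


def idx1 (i : Fin 3) : Fin 6 := ⟨i.val, by omega⟩
def idx2 (i : Fin 3) : Fin 6 := ⟨i.val + 3, by omega⟩

lemma idx1_ne_idx2 (i j : Fin 3) : idx1 i ≠ idx2 j := by
  intro h
  have := congrArg Fin.val h
  simp only [idx1, idx2] at this
  omega

def w1 (a b c d : ZMod 3) : Fin 6 → ℂ := ![1, ωz a, ωz b, ωz c, ωz d, ωz (a+b-c-d)]

def w2 (i j : Fin 3) (c : ZMod 3) : Fin 6 → ℂ :=
  fun k => if k = idx1 i then 1 else if k = idx2 j then ωz c else 0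

lemma w1e0 (a b c d : ZMod 3) : w1 a b c d 0 = 1 := rfl
lemma w1e1 (a b c d : ZMod 3) : w1 a b c d 1 = ωz a := rfl
lemma w1e2 (a b c d : ZMod 3) : w1 a b c d 2 = ωz b := rfl
lemma w1e3 (a b c d : ZMod 3) : w1 a b c d 3 = ωz c := rfl
lemma w1e4 (a b c d : ZMod 3) : w1 a b c d 4 = ωz d := rfl
lemma w1e5 (a b c d : ZMod 3) : w1 a b c d 5 = ωz (a+b-c-d) := rfl

lemma w1_ne (a b c d : ZMod 3) : w1 a b c d ≠ 0 := by
  intro h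
  have := congrFun h 0
  rw [w1e0] at this
  simp at this

lemma w1_nonzero (a b c d : ZMod 3) (k : Fin 6) : w1 a b c d k ≠ 0 := by
  fin_cases k <;>
    simp only [w1e0, w1e1, w1e2, w1e3, w1e4, w1e5] <;>
    first | exact one_ne_zero | exact ωz_ne0 _

lemma w2_at1 (i j : Fin 3) (c : ZMod 3) : w2 i j c (idx1 i) = 1 := if_pos rfl

lemma w2_at2 (i j : Fin 3) (c : ZMod 3) : w2 i j c (idx2 j) = ωz c := by
  rw [w2, if_neg (Ne.symm (idx1_ne_idx2 i j)), if_pos rfl]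

lemma w2_zero (i j : Fin 3) (c : ZMod 3) (k : Fin 6) (h1 : k ≠ idx1 i) (h2 : k ≠ idx2 j) :
    w2 i j c k = 0 := by
  rw [w2, if_neg h1, if_neg h2]

lemma w2_ne (i j : Fin 3) (c : ZMod 3) : w2 i j c ≠ 0 := by
  intro h
  have := congrFun h (idx1 i)
  rw [w2_at1] at this
  simp at this

lemma div3_helper (u w : ℂ) : u/3 * (3*w) = u*w := by ring
lemma div3_helper' (u w : ℂ) : u/3 * (-(3*w)) = -(u*w) := by ring

lemma h3z : (3 : ZMod 3) = 0 := rfl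

lemma fv0 : ((0:Fin 6):ℕ) = 0 := rfl
lemma fv1 : ((1:Fin 6):ℕ) = 1 := rfl
lemma fv2 : ((2:Fin 6):ℕ) = 2 := rfl
lemma fv3 : ((3:Fin 6):ℕ) = 3 := rfl
lemma fv4 : ((4:Fin 6):ℕ) = 4 := rfl
lemma fv5 : ((5:Fin 6):ℕ) = 5 := rfl

lemma cond_w1_E1 (a b c d : ZMod 3) :
    w1 a b c d 0 ^ 3 + w1 a b c d 1 ^ 3 + w1 a b c d 2 ^ 3
      - w1 a b c d 3 ^ 3 - w1 a b c d 4 ^ 3 - w1 a b c d 5 ^ 3 = 0 := by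
  rw [w1e0, w1e1, w1e2, w1e3, w1e4, w1e5, ωz_cube, ωz_cube, ωz_cube, ωz_cube, ωz_cube]
  norm_num

lemma cond_w1_E2 (a b c d : ZMod 3) :
    w1 a b c d 0 * w1 a b c d 1 * w1 a b c d 2
      - w1 a b c d 3 * w1 a b c d 4 * w1 a b c d 5 = 0 := by
  rw [w1e0, w1e1, w1e2, w1e3, w1e4, w1e5, one_mul, ← ωz_add, ← ωz_add, ← ωz_add,
    show c + d + (a+b-c-d) = a + b from by ring, sub_self]

lemma cond_w1_rank (a b c d : ZMod 3) : (J (w1 a b c d)).rank ≤ 1 := by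
  apply rank_le_one_of_row _ (ωz (a+b) / 3)
  intro k
  fin_cases k
  · show J (w1 a b c d) 1 0 = ωz (a+b) / 3 * J (w1 a b c d) 0 0
    rw [J10, J00, w1e0, w1e1, w1e2, one_pow, mul_one,
      div_mul_cancel₀ _ (by norm_num : (3:ℂ) ≠ 0), ← ωz_add]
  · show J (w1 a b c d) 1 1 = ωz (a+b) / 3 * J (w1 a b c d) 0 1
    rw [J11, J01, w1e0, w1e1, w1e2, one_mul, pow_two, ← ωz_add, div3_helper, ← ωz_add]
    exact congrArg ωz (by linear_combination (-a) * h3z)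
  · show J (w1 a b c d) 1 2 = ωz (a+b) / 3 * J (w1 a b c d) 0 2
    rw [J12, J02, w1e0, w1e1, w1e2, one_mul, pow_two, ← ωz_add, div3_helper, ← ωz_add]
    exact congrArg ωz (by linear_combination (-b) * h3z)
  · show J (w1 a b c d) 1 3 = ωz (a+b) / 3 * J (w1 a b c d) 0 3
    rw [J13, J03, w1e3, w1e4, w1e5, pow_two, ← ωz_add, div3_helper', ← ωz_add, ← ωz_add]
    exact congrArg (fun t => -(ωz t)) (by linear_combination (-c) * h3z)
  · show J (w1 a b c d) 1 4 = ωz (a+b) / 3 * J (w1 a b c d) 0 4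
    rw [J14, J04, w1e3, w1e4, w1e5, pow_two, ← ωz_add, div3_helper', ← ωz_add, ← ωz_add]
    exact congrArg (fun t => -(ωz t)) (by linear_combination (-d) * h3z)
  · show J (w1 a b c d) 1 5 = ωz (a+b) / 3 * J (w1 a b c d) 0 5
    rw [J15, J05, w1e3, w1e4, w1e5, pow_two, ← ωz_add, div3_helper', ← ωz_add, ← ωz_add]
    exact congrArg (fun t => -(ωz t)) (by linear_combination (c+d-a-b) * h3z)

lemma cond_w2_E1 (i j : Fin 3) (c : ZMod 3) :
    w2 i j c 0 ^ 3 + w2 i j c 1 ^ 3 + w2 i j c 2 ^ 3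
      - w2 i j c 3 ^ 3 - w2 i j c 4 ^ 3 - w2 i j c 5 ^ 3 = 0 := by
  fin_cases i <;> fin_cases j <;>
    norm_num [w2, idx1, idx2, Fin.ext_iff, ωz_cube, fv0, fv1, fv2, fv3, fv4, fv5]

lemma cond_w2_E2 (i j : Fin 3) (c : ZMod 3) :
    w2 i j c 0 * w2 i j c 1 * w2 i j c 2 - w2 i j c 3 * w2 i j c 4 * w2 i j c 5 = 0 := by
  fin_cases i <;> fin_cases j <;>
    norm_num [w2, idx1, idx2, Fin.ext_iff, fv0, fv1, fv2, fv3, fv4, fv5]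

lemma cond_w2_rank (i j : Fin 3) (c : ZMod 3) : (J (w2 i j c)).rank ≤ 1 := by
  apply rank_le_one_of_row _ 0
  intro k
  rw [zero_mul]
  fin_cases k
  · show J (w2 i j c) 1 0 = 0
    rw [J10]
    fin_cases i <;> fin_cases j <;>
      norm_num [w2, idx1, idx2, Fin.ext_iff, fv0, fv1, fv2, fv3, fv4, fv5]
  · show J (w2 i j c) 1 1 = 0
    rw [J11]
    fin_cases i <;> fin_cases j <;>
      norm_num [w2, idx1, idx2, Fin.ext_iff, fv0, fv1, fv2, fv3, fv4, fv5]
  · show J (w2 i j c) 1 2 = 0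
    rw [J12]
    fin_cases i <;> fin_cases j <;>
      norm_num [w2, idx1, idx2, Fin.ext_iff, fv0, fv1, fv2, fv3, fv4, fv5]
  · show J (w2 i j c) 1 3 = 0
    rw [J13]
    fin_cases i <;> fin_cases j <;>
      norm_num [w2, idx1, idx2, Fin.ext_iff, fv0, fv1, fv2, fv3, fv4, fv5]
  · show J (w2 i j c) 1 4 = 0
    rw [J14]
    fin_cases i <;> fin_cases j <;>
      norm_num [w2, idx1, idx2, Fin.ext_iff, fv0, fv1, fv2, fv3, fv4, fv5]
  · show J (w2 i j c) 1 5 = 0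
    rw [J15]
    fin_cases i <;> fin_cases j <;>
      norm_num [w2, idx1, idx2, Fin.ext_iff, fv0, fv1, fv2, fv3, fv4, fv5]



lemma cube_zero {x : ℂ} (h : x^3 = 0) : x = 0 := by
  exact pow_eq_zero_iff (by norm_num : (3:ℕ) ≠ 0) |>.1 h

lemma triple (x y z : ℂ) (hp : x*y*z = 0)
    (c1 : z*(x^3-y^3) = 0) (c2 : y*(x^3-z^3) = 0) :
    (y = 0 ∧ z = 0) ∨ (x = 0 ∧ z = 0) ∨ (x = 0 ∧ y = 0) := by
  rcases mul_eq_zero.1 hp with hxy | hz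
  · rcases mul_eq_zero.1 hxy with hx | hy
    · have h' : z * y^3 = 0 := by linear_combination -c1 + z*x^2*hx
      rcases mul_eq_zero.1 h' with h'' | h''
      · exact Or.inr (Or.inl ⟨hx, h''⟩)
      · exact Or.inr (Or.inr ⟨hx, cube_zero h''⟩)
    · have h' : z * x^3 = 0 := by linear_combination c1 + z*y^2*hy
      rcases mul_eq_zero.1 h' with h'' | h''
      · exact Or.inl ⟨hy, h''⟩
      · exact Or.inr (Or.inr ⟨cube_zero h'', hy⟩)
  · have h' : y * x^3 = 0 := by linear_combination c2 + y*z^2*hz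
    rcases mul_eq_zero.1 h' with h'' | h''
    · exact Or.inl ⟨h'', hz⟩
    · exact Or.inr (Or.inl ⟨cube_zero h'', hz⟩)

lemma zero_case (v : Fin 6 → ℂ) (hv : v ≠ 0) (i j : Fin 3)
    (hz : ∀ k : Fin 6, k ≠ idx1 i → k ≠ idx2 j → v k = 0)
    (hE1 : v 0^3 + v 1^3 + v 2^3 - v 3^3 - v 4^3 - v 5^3 = 0) :
    ∃ c : ZMod 3, Projectivization.mk ℂ v hv = Projectivization.mk ℂ (w2 i j c) (w2_ne i j c) := by
  have hIJ : v (idx1 i)^3 = v (idx2 j)^3 := by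
    fin_cases i <;> fin_cases j
    · show v 0 ^ 3 = v 3 ^ 3
      have e1 : v 1 = 0 := hz 1 (by decide) (by decide)
      have e2 : v 2 = 0 := hz 2 (by decide) (by decide)
      have e4 : v 4 = 0 := hz 4 (by decide) (by decide)
      have e5 : v 5 = 0 := hz 5 (by decide) (by decide)
      rw [e1, e2, e4, e5] at hE1
      linear_combination hE1
    · show v 0 ^ 3 = v 4 ^ 3
      have e1 : v 1 = 0 := hz 1 (by decide) (by decide)
      have e2 : v 2 = 0 := hz 2 (by decide) (by decide)
      have e3 : v 3 = 0 := hz 3 (by decide) (by decide)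
      have e5 : v 5 = 0 := hz 5 (by decide) (by decide)
      rw [e1, e2, e3, e5] at hE1
      linear_combination hE1
    · show v 0 ^ 3 = v 5 ^ 3
      have e1 : v 1 = 0 := hz 1 (by decide) (by decide)
      have e2 : v 2 = 0 := hz 2 (by decide) (by decide)
      have e3 : v 3 = 0 := hz 3 (by decide) (by decide)
      have e4 : v 4 = 0 := hz 4 (by decide) (by decide)
      rw [e1, e2, e3, e4] at hE1
      linear_combination hE1
    · show v 1 ^ 3 = v 3 ^ 3
      have e0 : v 0 = 0 := hz 0 (by decide) (by decide)
      have e2 : v 2 = 0 := hz 2 (by decide) (by decide)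
      have e4 : v 4 = 0 := hz 4 (by decide) (by decide)
      have e5 : v 5 = 0 := hz 5 (by decide) (by decide)
      rw [e0, e2, e4, e5] at hE1
      linear_combination hE1
    · show v 1 ^ 3 = v 4 ^ 3
      have e0 : v 0 = 0 := hz 0 (by decide) (by decide)
      have e2 : v 2 = 0 := hz 2 (by decide) (by decide)
      have e3 : v 3 = 0 := hz 3 (by decide) (by decide)
      have e5 : v 5 = 0 := hz 5 (by decide) (by decide)
      rw [e0, e2, e3, e5] at hE1
      linear_combination hE1
    · show v 1 ^ 3 = v 5 ^ 3
      have e0 : v 0 = 0 := hz 0 (by decide) (by decide)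
      have e2 : v 2 = 0 := hz 2 (by decide) (by decide)
      have e3 : v 3 = 0 := hz 3 (by decide) (by decide)
      have e4 : v 4 = 0 := hz 4 (by decide) (by decide)
      rw [e0, e2, e3, e4] at hE1
      linear_combination hE1
    · show v 2 ^ 3 = v 3 ^ 3
      have e0 : v 0 = 0 := hz 0 (by decide) (by decide)
      have e1 : v 1 = 0 := hz 1 (by decide) (by decide)
      have e4 : v 4 = 0 := hz 4 (by decide) (by decide)
      have e5 : v 5 = 0 := hz 5 (by decide) (by decide)
      rw [e0, e1, e4, e5] at hE1
      linear_combination hE1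
    · show v 2 ^ 3 = v 4 ^ 3
      have e0 : v 0 = 0 := hz 0 (by decide) (by decide)
      have e1 : v 1 = 0 := hz 1 (by decide) (by decide)
      have e3 : v 3 = 0 := hz 3 (by decide) (by decide)
      have e5 : v 5 = 0 := hz 5 (by decide) (by decide)
      rw [e0, e1, e3, e5] at hE1
      linear_combination hE1
    · show v 2 ^ 3 = v 5 ^ 3
      have e0 : v 0 = 0 := hz 0 (by decide) (by decide)
      have e1 : v 1 = 0 := hz 1 (by decide) (by decide)
      have e3 : v 3 = 0 := hz 3 (by decide) (by decide)
      have e4 : v 4 = 0 := hz 4 (by decide) (by decide)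
      rw [e0, e1, e3, e4] at hE1
      linear_combination hE1
  have hI : v (idx1 i) ≠ 0 := by
    intro h0
    apply hv; funext k
    have hJ : v (idx2 j) = 0 := by
      apply cube_zero; rw [← hIJ, h0]; ring
    show v k = 0
    by_cases hk1 : k = idx1 i
    · rw [hk1, h0]
    by_cases hk2 : k = idx2 j
    · rw [hk2, hJ]
    exact hz k hk1 hk2
  have hz3 : (v (idx2 j) * (v (idx1 i))⁻¹)^3 = 1 := by
    rw [mul_pow, inv_pow, ← hIJ]
    exact mul_inv_cancel₀ (pow_ne_zero _ hI)
  obtain ⟨cc, hcc⟩ := exists_ωz _ hz3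
  refine ⟨cc, ?_⟩
  rw [Projectivization.mk_eq_mk_iff']
  refine ⟨v (idx1 i), ?_⟩
  funext k
  show v (idx1 i) * w2 i j cc k = v k
  by_cases hk1 : k = idx1 i
  · rw [hk1, w2_at1, mul_one]
  by_cases hk2 : k = idx2 j
  · rw [hk2, w2_at2, ← hcc, mul_comm, mul_assoc, inv_mul_cancel₀ hI, mul_one]
  · rw [w2_zero i j cc k hk1 hk2, mul_zero]
    exact (hz k hk1 hk2).symm

lemma classify (v : Fin 6 → ℂ) (hv : v ≠ 0)
    (hE1 : v 0^3 + v 1^3 + v 2^3 - v 3^3 - v 4^3 - v 5^3 = 0)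
    (hE2 : v 0 * v 1 * v 2 - v 3 * v 4 * v 5 = 0)
    (hr : (J v).rank ≤ 1) :
    (∃ a b c d : ZMod 3,
      Projectivization.mk ℂ v hv = Projectivization.mk ℂ (w1 a b c d) (w1_ne a b c d)) ∨
    (∃ (i j : Fin 3) (c : ZMod 3),
      Projectivization.mk ℂ v hv = Projectivization.mk ℂ (w2 i j c) (w2_ne i j c)) := by
  obtain ⟨c01, c02, c12, c34, c35, c45⟩ := minors6 v hr
  by_cases hp : v 0 * v 1 * v 2 = 0
  · right
    have hp2 : v 3 * v 4 * v 5 = 0 := by linear_combination hp - hE2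
    have t1 := triple (v 0) (v 1) (v 2) hp c01 c02
    have t2 := triple (v 3) (v 4) (v 5) hp2 c34 c35
    rcases t1 with ⟨h1, h2⟩ | ⟨h1, h2⟩ | ⟨h1, h2⟩ <;>
      rcases t2 with ⟨h4, h5⟩ | ⟨h4, h5⟩ | ⟨h4, h5⟩
    · have hzk : ∀ k : Fin 6, k ≠ idx1 0 → k ≠ idx2 0 → v k = 0 := by
        intro k hk1 hk2
        fin_cases k <;>
          first
            | exact h1 | exact h2 | exact h4 | exact h5
            | (exfalso; exact hk1 (by decide)) | (exfalso; exact hk2 (by decide))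
      obtain ⟨c, hc⟩ := zero_case v hv _ _ hzk hE1
      exact ⟨_, _, c, hc⟩
    · have hzk : ∀ k : Fin 6, k ≠ idx1 0 → k ≠ idx2 1 → v k = 0 := by
        intro k hk1 hk2
        fin_cases k <;>
          first
            | exact h1 | exact h2 | exact h4 | exact h5
            | (exfalso; exact hk1 (by decide)) | (exfalso; exact hk2 (by decide))
      obtain ⟨c, hc⟩ := zero_case v hv _ _ hzk hE1
      exact ⟨_, _, c, hc⟩
    · have hzk : ∀ k : Fin 6, k ≠ idx1 0 → k ≠ idx2 2 → v k = 0 := by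
        intro k hk1 hk2
        fin_cases k <;>
          first
            | exact h1 | exact h2 | exact h4 | exact h5
            | (exfalso; exact hk1 (by decide)) | (exfalso; exact hk2 (by decide))
      obtain ⟨c, hc⟩ := zero_case v hv _ _ hzk hE1
      exact ⟨_, _, c, hc⟩
    · have hzk : ∀ k : Fin 6, k ≠ idx1 1 → k ≠ idx2 0 → v k = 0 := by
        intro k hk1 hk2
        fin_cases k <;>
          first
            | exact h1 | exact h2 | exact h4 | exact h5
            | (exfalso; exact hk1 (by decide)) | (exfalso; exact hk2 (by decide))
      obtain ⟨c, hc⟩ := zero_case v hv _ _ hzk hE1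
      exact ⟨_, _, c, hc⟩
    · have hzk : ∀ k : Fin 6, k ≠ idx1 1 → k ≠ idx2 1 → v k = 0 := by
        intro k hk1 hk2
        fin_cases k <;>
          first
            | exact h1 | exact h2 | exact h4 | exact h5
            | (exfalso; exact hk1 (by decide)) | (exfalso; exact hk2 (by decide))
      obtain ⟨c, hc⟩ := zero_case v hv _ _ hzk hE1
      exact ⟨_, _, c, hc⟩
    · have hzk : ∀ k : Fin 6, k ≠ idx1 1 → k ≠ idx2 2 → v k = 0 := by
        intro k hk1 hk2
        fin_cases k <;>
          first
            | exact h1 | exact h2 | exact h4 | exact h5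
            | (exfalso; exact hk1 (by decide)) | (exfalso; exact hk2 (by decide))
      obtain ⟨c, hc⟩ := zero_case v hv _ _ hzk hE1
      exact ⟨_, _, c, hc⟩
    · have hzk : ∀ k : Fin 6, k ≠ idx1 2 → k ≠ idx2 0 → v k = 0 := by
        intro k hk1 hk2
        fin_cases k <;>
          first
            | exact h1 | exact h2 | exact h4 | exact h5
            | (exfalso; exact hk1 (by decide)) | (exfalso; exact hk2 (by decide))
      obtain ⟨c, hc⟩ := zero_case v hv _ _ hzk hE1
      exact ⟨_, _, c, hc⟩
    · have hzk : ∀ k : Fin 6, k ≠ idx1 2 → k ≠ idx2 1 → v k = 0 := by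
        intro k hk1 hk2
        fin_cases k <;>
          first
            | exact h1 | exact h2 | exact h4 | exact h5
            | (exfalso; exact hk1 (by decide)) | (exfalso; exact hk2 (by decide))
      obtain ⟨c, hc⟩ := zero_case v hv _ _ hzk hE1
      exact ⟨_, _, c, hc⟩
    · have hzk : ∀ k : Fin 6, k ≠ idx1 2 → k ≠ idx2 2 → v k = 0 := by
        intro k hk1 hk2
        fin_cases k <;>
          first
            | exact h1 | exact h2 | exact h4 | exact h5
            | (exfalso; exact hk1 (by decide)) | (exfalso; exact hk2 (by decide))
      obtain ⟨c, hc⟩ := zero_case v hv _ _ hzk hE1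
      exact ⟨_, _, c, hc⟩
  · left
    have h0 : v 0 ≠ 0 := fun h => hp (by rw [h]; ring)
    have h1 : v 1 ≠ 0 := fun h => hp (by rw [h]; ring)
    have h2 : v 2 ≠ 0 := fun h => hp (by rw [h]; ring)
    have hp2 : v 3 * v 4 * v 5 ≠ 0 := fun h => hp (by linear_combination hE2 + h)
    have h4 : v 4 ≠ 0 := fun h => hp2 (by rw [h]; ring)
    have h5 : v 5 ≠ 0 := fun h => hp2 (by rw [h]; ring)
    have e01 : v 0^3 = v 1^3 := sub_eq_zero.1 ((mul_eq_zero.1 c01).resolve_left h2)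
    have e02 : v 0^3 = v 2^3 := sub_eq_zero.1 ((mul_eq_zero.1 c02).resolve_left h1)
    have e34 : v 3^3 = v 4^3 := sub_eq_zero.1 ((mul_eq_zero.1 c34).resolve_left h5)
    have e35 : v 3^3 = v 5^3 := sub_eq_zero.1 ((mul_eq_zero.1 c35).resolve_left h4)
    have e03 : v 0^3 = v 3^3 := by linear_combination (hE1 + e01 + e02 - e34 - e35)/3
    have e04 : v 0^3 = v 4^3 := e03.trans e34
    have e05 : v 0^3 = v 5^3 := e03.trans e35
    have hq : ∀ k : Fin 6, v 0^3 = v k^3 → (v k * (v 0)⁻¹)^3 = 1 := by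
      intro k hk
      rw [mul_pow, inv_pow, ← hk]
      exact mul_inv_cancel₀ (pow_ne_zero _ h0)
    obtain ⟨a1, ha1⟩ := exists_ωz _ (hq 1 e01)
    obtain ⟨a2, ha2⟩ := exists_ωz _ (hq 2 e02)
    obtain ⟨a3, ha3⟩ := exists_ωz _ (hq 3 e03)
    obtain ⟨a4, ha4⟩ := exists_ωz _ (hq 4 e04)
    obtain ⟨a5, ha5⟩ := exists_ωz _ (hq 5 e05)
    have hw : ∀ (k : Fin 6) (a : ZMod 3), v k * (v 0)⁻¹ = ωz a → v k = ωz a * v 0 := by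
      intro k a hk
      rw [← hk]; field_simp
    have hv1 := hw 1 a1 ha1
    have hv2 := hw 2 a2 ha2
    have hv3 := hw 3 a3 ha3
    have hv4 := hw 4 a4 ha4
    have hv5 := hw 5 a5 ha5
    have hE2' := hE2
    rw [hv1, hv2, hv3, hv4, hv5] at hE2'
    have key : ωz (a1 + a2) = ωz (a3 + a4 + a5) := by
      apply mul_right_cancel₀ (pow_ne_zero 3 h0)
      rw [ωz_add, ωz_add, ωz_add]
      linear_combination hE2'
    have ha : a1 + a2 = a3 + a4 + a5 := ωz_inj key
    refine ⟨a1, a2, a3, a4, ?_⟩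
    rw [Projectivization.mk_eq_mk_iff']
    refine ⟨v 0, ?_⟩
    funext k
    fin_cases k
    · show v 0 * w1 a1 a2 a3 a4 0 = v 0
      rw [w1e0, mul_one]
    · show v 0 * w1 a1 a2 a3 a4 1 = v 1
      rw [w1e1, hv1]; ring
    · show v 0 * w1 a1 a2 a3 a4 2 = v 2
      rw [w1e2, hv2]; ring
    · show v 0 * w1 a1 a2 a3 a4 3 = v 3
      rw [w1e3, hv3]; ring
    · show v 0 * w1 a1 a2 a3 a4 4 = v 4
      rw [w1e4, hv4]; ring
    · show v 0 * w1 a1 a2 a3 a4 5 = v 5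
      rw [w1e5, show a1+a2-a3-a4 = a5 from by linear_combination ha, hv5]; ring

lemma idx1_inj {i i' : Fin 3} (h : idx1 i = idx1 i') : i = i' := by
  have := congrArg Fin.val h
  simp only [idx1] at this
  exact Fin.ext this

lemma idx2_inj {i i' : Fin 3} (h : idx2 i = idx2 i') : i = i' := by
  have := congrArg Fin.val h
  simp only [idx2] at this
  omega

def g : (ZMod 3 × ZMod 3 × ZMod 3 × ZMod 3) ⊕ (Fin 3 × Fin 3 × ZMod 3) →
    Projectivization ℂ (Fin 6 → ℂ)
  | Sum.inl (a, b, c, d) => Projectivization.mk ℂ (w1 a b c d) (w1_ne a b c d)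
  | Sum.inr (i, j, c) => Projectivization.mk ℂ (w2 i j c) (w2_ne i j c)

lemma g_inj : Function.Injective g := by
  rintro (⟨a, b, c, d⟩ | ⟨i, j, c⟩) (⟨a', b', c', d'⟩ | ⟨i', j', c'⟩) h <;>
    simp only [g] at h <;> rw [Projectivization.mk_eq_mk_iff'] at h <;> obtain ⟨u, hu⟩ := h
  · -- inl inl : u • w1 a' b' c' d' = w1 a b c d
    have hcf : ∀ k, u * w1 a' b' c' d' k = w1 a b c d k := fun k => by
      have := congrFun hu k; rwa [Pi.smul_apply, smul_eq_mul] at this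
    have h0 := hcf 0
    simp only [w1e0, mul_one] at h0
    have h1 := hcf 1; have h2 := hcf 2; have h3 := hcf 3; have h4 := hcf 4
    simp only [w1e1, w1e2, w1e3, w1e4, h0, one_mul] at h1 h2 h3 h4
    rw [ωz_inj h1, ωz_inj h2, ωz_inj h3, ωz_inj h4]
  · -- inl inr : u • w2 i' j' c' = w1 a b c d
    exfalso
    have hz : w2 i' j' c' (idx1 (i' + 1)) = 0 :=
      w2_zero _ _ _ _ (by fin_cases i' <;> decide) (idx1_ne_idx2 _ _)
    have := congrFun hu (idx1 (i' + 1))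
    rw [Pi.smul_apply, smul_eq_mul, hz, mul_zero] at this
    exact (w1_nonzero a b c d _) this.symm
  · -- inr inl : u • w1 a' b' c' d' = w2 i j c
    exfalso
    have h1 := congrFun hu (idx1 i)
    rw [Pi.smul_apply, smul_eq_mul, w2_at1] at h1
    have h2 := congrFun hu (idx1 (i + 1))
    rw [Pi.smul_apply, smul_eq_mul,
      w2_zero i j c _ (by fin_cases i <;> decide) (idx1_ne_idx2 _ _)] at h2
    rcases mul_eq_zero.1 h2 with h' | h'
    · rw [h', zero_mul] at h1; exact zero_ne_one h1
    · exact (w1_nonzero a' b' c' d' _) h'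
  · -- inr inr : u • w2 i' j' c' = w2 i j c
    have hcf : ∀ k, u * w2 i' j' c' k = w2 i j c k := fun k => by
      have := congrFun hu k; rwa [Pi.smul_apply, smul_eq_mul] at this
    have hii : i' = i := by
      by_contra hne
      have hz : w2 i' j' c' (idx1 i) = 0 :=
        w2_zero _ _ _ _ (fun hh => hne (idx1_inj hh).symm) (idx1_ne_idx2 _ _)
      have := hcf (idx1 i)
      rw [hz, mul_zero, w2_at1] at this
      exact zero_ne_one this
    subst hii
    have hu1 : u = 1 := by
      have := hcf (idx1 i')
      rwa [w2_at1, w2_at1, mul_one] at this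
    have hjj : j' = j := by
      by_contra hne
      have hz : w2 i' j' c' (idx2 j) = 0 :=
        w2_zero _ _ _ _ (Ne.symm (idx1_ne_idx2 _ _)) (fun hh => hne (idx2_inj hh).symm)
      have := hcf (idx2 j)
      rw [hz, mul_zero, w2_at2] at this
      exact (ωz_ne0 c) this.symm
    subst hjj
    have hcc : ωz c' = ωz c := by
      have := hcf (idx2 j')
      rwa [w2_at2, w2_at2, hu1, one_mul] at this
    rw [ωz_inj hcc]

lemma g_mem (t : (ZMod 3 × ZMod 3 × ZMod 3 × ZMod 3) ⊕ (Fin 3 × Fin 3 × ZMod 3)) :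
    ((g t).rep 0 ^ 3 + (g t).rep 1 ^ 3 + (g t).rep 2 ^ 3
      - (g t).rep 3 ^ 3 - (g t).rep 4 ^ 3 - (g t).rep 5 ^ 3 = 0) ∧
    ((g t).rep 0 * (g t).rep 1 * (g t).rep 2 - (g t).rep 3 * (g t).rep 4 * (g t).rep 5 = 0) ∧
    (J ((g t).rep)).rank ≤ 1 := by
  obtain (⟨a, b, c, d⟩ | ⟨i, j, c⟩) := t
  · obtain ⟨u, hu⟩ := Projectivization.exists_smul_eq_mk_rep ℂ (w1 a b c d) (w1_ne a b c d)
    have hrep : (g (Sum.inl (a, b, c, d))).rep = (u : ℂ) • w1 a b c d := by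
      rw [show g (Sum.inl (a, b, c, d)) = Projectivization.mk ℂ (w1 a b c d) (w1_ne a b c d)
        from rfl, ← hu]
      rfl
    rw [hrep]
    refine ⟨?_, ?_, ?_⟩
    · simp only [Pi.smul_apply, smul_eq_mul]
      linear_combination (u : ℂ)^3 * cond_w1_E1 a b c d
    · simp only [Pi.smul_apply, smul_eq_mul]
      linear_combination (u : ℂ)^3 * cond_w1_E2 a b c d
    · rw [J_smul, rank_smul_eq (pow_ne_zero 2 u.ne_zero)]
      exact cond_w1_rank a b c d
  · obtain ⟨u, hu⟩ := Projectivization.exists_smul_eq_mk_rep ℂ (w2 i j c) (w2_ne i j c)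
    have hrep : (g (Sum.inr (i, j, c))).rep = (u : ℂ) • w2 i j c := by
      rw [show g (Sum.inr (i, j, c)) = Projectivization.mk ℂ (w2 i j c) (w2_ne i j c)
        from rfl, ← hu]
      rfl
    rw [hrep]
    refine ⟨?_, ?_, ?_⟩
    · simp only [Pi.smul_apply, smul_eq_mul]
      linear_combination (u : ℂ)^3 * cond_w2_E1 i j c
    · simp only [Pi.smul_apply, smul_eq_mul]
      linear_combination (u : ℂ)^3 * cond_w2_E2 i j c
    · rw [J_smul, rank_smul_eq (pow_ne_zero 2 u.ne_zero)]
      exact cond_w2_rank i j c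

end SchoenAux

/-- The Schoen threefold `x₁³+x₂³+x₃³ = x₄³+x₅³+x₆³`, `x₁x₂x₃ = x₄x₅x₆` in `ℙ⁵(ℂ)` has
exactly 108 singular points: the set of points where both polynomials vanish and the `2 × 6`
Jacobian matrix has rank `≤ 1` has cardinality `108`. -/
theorem stmt_13 :
    {P : Projectivization ℂ (Fin 6 → ℂ) |
        (P.rep 0 ^ 3 + P.rep 1 ^ 3 + P.rep 2 ^ 3
          - P.rep 3 ^ 3 - P.rep 4 ^ 3 - P.rep 5 ^ 3 = 0) ∧
        (P.rep 0 * P.rep 1 * P.rep 2 - P.rep 3 * P.rep 4 * P.rep 5 = 0) ∧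
        Matrix.rank (Matrix.of fun (i : Fin 2) (j : Fin 6) =>
          if i = 0 then
            (if (j : ℕ) < 3 then 3 * P.rep j ^ 2 else -(3 * P.rep j ^ 2))
          else
            (if (j : ℕ) < 3 then ∏ l ∈ ({0, 1, 2} : Finset (Fin 6)) \ {j}, P.rep l
             else -(∏ l ∈ ({3, 4, 5} : Finset (Fin 6)) \ {j}, P.rep l))) ≤ 1}.ncard
      = 108 := by
  have hset : {P : Projectivization ℂ (Fin 6 → ℂ) |
        (P.rep 0 ^ 3 + P.rep 1 ^ 3 + P.rep 2 ^ 3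
          - P.rep 3 ^ 3 - P.rep 4 ^ 3 - P.rep 5 ^ 3 = 0) ∧
        (P.rep 0 * P.rep 1 * P.rep 2 - P.rep 3 * P.rep 4 * P.rep 5 = 0) ∧
        Matrix.rank (Matrix.of fun (i : Fin 2) (j : Fin 6) =>
          if i = 0 then
            (if (j : ℕ) < 3 then 3 * P.rep j ^ 2 else -(3 * P.rep j ^ 2))
          else
            (if (j : ℕ) < 3 then ∏ l ∈ ({0, 1, 2} : Finset (Fin 6)) \ {j}, P.rep l
             else -(∏ l ∈ ({3, 4, 5} : Finset (Fin 6)) \ {j}, P.rep l))) ≤ 1}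
      = Set.range g := by
    ext P
    simp only [Set.mem_setOf_eq, Set.mem_range]
    constructor
    · rintro ⟨hE1, hE2, hr⟩
      have hr' : (J P.rep).rank ≤ 1 := hr
      rcases classify P.rep (Projectivization.rep_nonzero P) hE1 hE2 hr' with
        ⟨a, b, c, d, hm⟩ | ⟨i, j, c, hm⟩
      · exact ⟨Sum.inl (a, b, c, d), by
          rw [show g (Sum.inl (a, b, c, d)) = Projectivization.mk ℂ (w1 a b c d) (w1_ne a b c d)
            from rfl, ← hm, Projectivization.mk_rep]⟩
      · exact ⟨Sum.inr (i, j, c), by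
          rw [show g (Sum.inr (i, j, c)) = Projectivization.mk ℂ (w2 i j c) (w2_ne i j c)
            from rfl, ← hm, Projectivization.mk_rep]⟩
    · rintro ⟨t, rfl⟩
      exact ⟨(g_mem t).1, (g_mem t).2.1, (g_mem t).2.2⟩
  rw [hset, ← Nat.card_coe_set_eq, Nat.card_range_of_injective g_inj,
    Nat.card_sum]
  simp only [Nat.card_prod, Nat.card_zmod, Nat.card_eq_fintype_card, Fintype.card_fin]
  norm_num
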